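/- Let s ≥ 1 be an integer and let α_v = (-1)^{v+1} (s!)^2 / (v (s+v)! (s-v)!) for v = 1,…,s. Then Σ_{v=1}^{s} α_v v = 1/2, and Σ_{v=1}^{s} α_v v^{2j+1} = 0 for every integer j with 1 ≤ j ≤ s-1. -/

import Mathlib

open Finset Polynomial


lemma altsum_poly (n : ℕ) : ∀ (p : Polynomial ℝ), p.degree < n →
    ∑ k ∈ Finset.range (n+1), (-1:ℝ)^k * (n.choose k : ℝ) * p.eval (k:ℝ) = 0 := by
  induction n with
  | zero =>
    intro p hp
    have hp0 : p = 0 := by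
      rw [← Polynomial.degree_eq_bot]
      exact Nat.WithBot.lt_zero_iff.mp (by exact_mod_cast hp)
    simp [hp0]
  | succ n IH =>
    intro p hp
    set q : Polynomial ℝ := p.comp (X + C 1) - p with hq
    have hdeg : q.degree < n := by
      by_cases hp0 : p = 0
      · simp [hq, hp0]
      · have hXC : (X + C (1:ℝ)).natDegree = 1 := by
          simpa using Polynomial.natDegree_X_add_C (1:ℝ)
        have hcompd : (p.comp (X + C 1)).natDegree = p.natDegree := by
          rw [Polynomial.natDegree_comp, hXC, mul_one]
        have hlc : (p.comp (X + C 1)).leadingCoeff = p.leadingCoeff := by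
          rw [Polynomial.leadingCoeff_comp (by rw [hXC]; norm_num)]
          have : (X + C (1:ℝ)).leadingCoeff = 1 := (Polynomial.monic_X_add_C 1).leadingCoeff
          rw [this, one_pow, mul_one]
        have hcomp0 : p.comp (X + C 1) ≠ 0 := by
          intro h
          apply hp0
          have := hlc
          rw [h, Polynomial.leadingCoeff_zero] at this
          exact Polynomial.leadingCoeff_eq_zero.mp this.symm
        have hdd : (p.comp (X + C 1)).degree = p.degree := by
          rw [Polynomial.degree_eq_natDegree hcomp0, Polynomial.degree_eq_natDegree hp0, hcompd]
        have h1 : q.degree < p.degree := by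
          have := Polynomial.degree_sub_lt hdd hcomp0 hlc
          rwa [hdd] at this
        have h2 : p.degree ≤ n := by
          rw [Polynomial.degree_eq_natDegree hp0] at hp ⊢
          exact_mod_cast Nat.lt_succ_iff.mp (by exact_mod_cast hp)
        exact lt_of_lt_of_le h1 h2
    have hIH := IH q hdeg
    have heval : ∀ k : ℕ, q.eval (k:ℝ) = p.eval ((k:ℝ)+1) - p.eval (k:ℝ) := by
      intro k; simp [hq]
    set F : ℕ → ℝ := fun k => p.eval (k:ℝ) with hF
    have hIH' : (∑ k ∈ range (n+1), (-1:ℝ)^k * (n.choose k : ℝ) * F (k+1))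
        - ∑ k ∈ range (n+1), (-1:ℝ)^k * (n.choose k : ℝ) * F k = 0 := by
      rw [← Finset.sum_sub_distrib]
      rw [← hIH]
      apply Finset.sum_congr rfl
      intro k _
      rw [heval k]
      have : ((k+1 : ℕ) : ℝ) = (k:ℝ) + 1 := by push_cast; ring
      rw [hF]; simp only [this]; ring
    -- expand the (n+1) sum
    have hA : ∑ k ∈ range (n+2), (-1:ℝ)^k * ((n+1).choose k : ℝ) * F k
        = ∑ k ∈ range (n+1), (-1:ℝ)^(k+1) * ((n.choose k : ℝ) + (n.choose (k+1):ℝ)) * F (k+1)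
          + F 0 := by
      rw [Finset.sum_range_succ' (fun k => (-1:ℝ)^k * ((n+1).choose k : ℝ) * F k) (n+1)]
      simp [Nat.choose_succ_succ]
    have hsplit : ∑ k ∈ range (n+1), (-1:ℝ)^(k+1) * ((n.choose k : ℝ) + (n.choose (k+1):ℝ)) * F (k+1)
        = (∑ k ∈ range (n+1), (-1:ℝ)^(k+1) * (n.choose k : ℝ) * F (k+1))
          + ∑ k ∈ range (n+1), (-1:ℝ)^(k+1) * (n.choose (k+1) : ℝ) * F (k+1) := by
      rw [← Finset.sum_add_distrib]
      apply Finset.sum_congr rfl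
      intro k _; ring
    have hB : ∑ k ∈ range (n+1), (-1:ℝ)^k * (n.choose k : ℝ) * F k
        = ∑ k ∈ range n, (-1:ℝ)^(k+1) * (n.choose (k+1) : ℝ) * F (k+1) + F 0 := by
      rw [Finset.sum_range_succ' (fun k => (-1:ℝ)^k * (n.choose k : ℝ) * F k) n]
      simp
    have htop : ∑ k ∈ range (n+1), (-1:ℝ)^(k+1) * (n.choose (k+1) : ℝ) * F (k+1)
        = ∑ k ∈ range n, (-1:ℝ)^(k+1) * (n.choose (k+1) : ℝ) * F (k+1) := by
      rw [Finset.sum_range_succ]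
      simp [Nat.choose_succ_self]
    have hneg : ∑ k ∈ range (n+1), (-1:ℝ)^(k+1) * (n.choose k : ℝ) * F (k+1)
        = - ∑ k ∈ range (n+1), (-1:ℝ)^k * (n.choose k : ℝ) * F (k+1) := by
      rw [← Finset.sum_neg_distrib]
      apply Finset.sum_congr rfl
      intro k _; ring
    rw [hA, hsplit, hneg, htop]
    have := hB
    linarith [hIH']

lemma key_sum (s j : ℕ) (hj : j < s) :
    ∑ v ∈ Finset.Icc 1 s, (-1:ℝ)^(v+1) * (((2*s).choose (s+v)) : ℝ) * (v:ℝ)^(2*j)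
      = (((2*s).choose s : ℝ)) * (0:ℝ)^(2*j) / 2 := by
  classical
  set f : ℕ → ℝ := fun k => (-1:ℝ)^k * (((2*s).choose k : ℕ) : ℝ) * ((k:ℝ) - (s:ℝ))^(2*j) with hf
  have hT : ∑ k ∈ Finset.range (2*s+1), f k = 0 := by
    have hdeg : ((X - C (s:ℝ))^(2*j)).degree < ((2*s : ℕ) : WithBot ℕ) := by
      rw [Polynomial.degree_pow, Polynomial.degree_X_sub_C]
      simp only [nsmul_eq_mul, mul_one]
      exact_mod_cast (by omega : 2*j < 2*s)
    have h := altsum_poly (2*s) ((X - C (s:ℝ))^(2*j)) hdeg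
    rw [← h]
    apply Finset.sum_congr rfl
    intro k _
    simp [hf]
  have hsplit : ∑ k ∈ Finset.range (2*s+1), f k
      = ∑ v ∈ Finset.range s, (f (s-(v+1)) + f (s+(v+1))) + f s := by
    have h1 : 2*s+1 = s + (s+1) := by ring
    rw [h1, Finset.sum_range_add]
    rw [Finset.sum_range_succ' (fun v => f (s+v)) s]
    rw [← Finset.sum_range_reflect f s]
    rw [Finset.sum_add_distrib]
    have : ∀ v ∈ Finset.range s, f (s - 1 - v) = f (s - (v+1)) := by
      intro v hv; congr 1; omega
    rw [Finset.sum_congr rfl this]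
    simp [add_assoc, add_comm, add_left_comm]
  have hterm : ∀ v ∈ Finset.range s,
      f (s-(v+1)) + f (s+(v+1))
        = -2 * (-1:ℝ)^s * ((-1:ℝ)^(v+1+1) * (((2*s).choose (s+(v+1))) : ℝ) * ((v+1:ℕ):ℝ)^(2*j)) := by
    intro v hv
    rw [Finset.mem_range] at hv
    set w : ℕ := v + 1 with hwdef
    have hw : w ≤ s := by omega
    have hcast : ((s - w : ℕ) : ℝ) = (s:ℝ) - (w:ℝ) := by
      push_cast [Nat.cast_sub hw]; ring
    have hch : (2*s).choose (s-w) = (2*s).choose (s+w) := by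
      have h1 : s - w = 2*s - (s+w) := by omega
      rw [h1, Nat.choose_symm (by omega)]
    have hsgn : (-1:ℝ)^(s-w) = (-1:ℝ)^(s+w) := by
      have h1 : s + w = (s - w) + 2*w := by omega
      rw [h1, pow_add, pow_mul]
      norm_num
    have heven : (-(w:ℝ))^(2*j) = ((w:ℝ))^(2*j) := Even.neg_pow ⟨j, by ring⟩ _
    have hcc : ((s + w : ℕ) : ℝ) - (s:ℝ) = (w:ℝ) := by push_cast; ring
    simp only [hf]
    rw [hcast, hch, hsgn, hcc]
    have h2 : (s:ℝ) - (w:ℝ) - (s:ℝ) = -(w:ℝ) := by ring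
    rw [h2, heven]
    have h3 : (-1:ℝ)^(s+w) = (-1:ℝ)^s * (-1:ℝ)^w := by rw [pow_add]
    have h4 : (-1:ℝ)^(w+1) = -(-1:ℝ)^w := by rw [pow_succ]; ring
    rw [h3, hwdef] at *
    push_cast
    ring
  have hfs : f s = (-1:ℝ)^s * (((2*s).choose s) : ℝ) * (0:ℝ)^(2*j) := by
    simp [hf]
  have hS : ∑ v ∈ Finset.Icc 1 s, (-1:ℝ)^(v+1) * (((2*s).choose (s+v)) : ℝ) * (v:ℝ)^(2*j)
      = ∑ v ∈ Finset.range s, (-1:ℝ)^(v+1+1) * (((2*s).choose (s+(v+1))) : ℝ) * ((v+1:ℕ):ℝ)^(2*j) := by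
    rw [← Finset.Ico_add_one_right_eq_Icc, Finset.sum_Ico_eq_sum_range]
    apply Finset.sum_congr (by norm_num)
    intro v hv
    have : 1 + v = v + 1 := by omega
    rw [this]
  set S := ∑ v ∈ Finset.Icc 1 s, (-1:ℝ)^(v+1) * (((2*s).choose (s+v)) : ℝ) * (v:ℝ)^(2*j) with hSdef
  have hE : (0:ℝ) = -2 * (-1:ℝ)^s * S + (-1:ℝ)^s * (((2*s).choose s) : ℝ) * (0:ℝ)^(2*j) := by
    have h0 := hT
    rw [hsplit, Finset.sum_congr rfl hterm, ← Finset.mul_sum, ← hS, hfs] at h0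
    linarith [h0]
  have hone : (-1:ℝ)^s * (-1:ℝ)^s = 1 := by
    rw [← pow_add]
    exact Even.neg_one_pow ⟨s, rfl⟩
  have := congrArg (fun x => (-1:ℝ)^s * x) hE
  simp only [mul_zero] at this
  nlinarith [this, hone]


lemma term_eq (s j v : ℕ) (hv1 : 1 ≤ v) (hvs : v ≤ s) (α : ℕ → ℝ)
    (hα : ∀ v : ℕ, α v = (-1 : ℝ) ^ (v + 1) * (Nat.factorial s : ℝ) ^ 2 /
      ((v : ℝ) * (Nat.factorial (s + v) : ℝ) * (Nat.factorial (s - v) : ℝ))) (j' : ℕ) :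
    α v * (v:ℝ)^(2*j+1) = (-1:ℝ)^(v+1) * (((2*s).choose (s+v)) : ℝ) * (v:ℝ)^(2*j)
      / (((2*s).choose s) : ℝ) := by
  have hv0 : (v:ℝ) ≠ 0 := by positivity
  have hf1 : ((s+v).factorial : ℝ) ≠ 0 := by positivity
  have hf2 : ((s-v).factorial : ℝ) ≠ 0 := by positivity
  have hc0 : (((2*s).choose s) : ℝ) ≠ 0 := by
    have := Nat.choose_pos (show s ≤ 2*s by omega)
    positivity
  have hNat : (2*s).choose (s+v) * (s+v).factorial * (s-v).factorial
      = (2*s).choose s * s.factorial * s.factorial := by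
    have h1 := Nat.choose_mul_factorial_mul_factorial (show s+v ≤ 2*s by omega)
    have h2 := Nat.choose_mul_factorial_mul_factorial (show s ≤ 2*s by omega)
    have e1 : 2*s - (s+v) = s - v := by omega
    have e2 : 2*s - s = s := by omega
    rw [e1] at h1; rw [e2] at h2
    omega
  have hNatR : (((2*s).choose (s+v)) : ℝ) * ((s+v).factorial : ℝ) * ((s-v).factorial : ℝ)
      = (((2*s).choose s) : ℝ) * (s.factorial : ℝ) * (s.factorial : ℝ) := by
    exact_mod_cast congrArg (Nat.cast : ℕ → ℝ) hNat
  rw [hα v]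
  have hpow : ((v:ℝ))^(2*j+1) = (v:ℝ) * (v:ℝ)^(2*j) := by ring
  rw [hpow]
  field_simp
  linear_combination (-1:ℝ) * hNatR

/-- For `s ≥ 1` and the centered-difference coefficients
`α v = (-1)^(v+1) (s!)² / (v (s+v)! (s-v)!)`, we have `∑_{v=1}^s α v · v = 1/2`
and `∑_{v=1}^s α v · v^(2j+1) = 0` for `1 ≤ j ≤ s-1`. -/
theorem sbp_alpha_identities (s : ℕ) (hs : 1 ≤ s) (α : ℕ → ℝ)
    (hα : ∀ v : ℕ, α v = (-1 : ℝ) ^ (v + 1) * (Nat.factorial s : ℝ) ^ 2 /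
      ((v : ℝ) * (Nat.factorial (s + v) : ℝ) * (Nat.factorial (s - v) : ℝ))) :
    (∑ v ∈ Finset.Icc 1 s, α v * (v : ℝ) = 1 / 2) ∧
    (∀ j : ℕ, 1 ≤ j → j ≤ s - 1 →
      ∑ v ∈ Finset.Icc 1 s, α v * (v : ℝ) ^ (2 * j + 1) = 0) := by
  have hc0 : (((2*s).choose s) : ℝ) ≠ 0 := by
    have := Nat.choose_pos (show s ≤ 2*s by omega)
    positivity
  have main : ∀ j : ℕ, j < s →
      ∑ v ∈ Finset.Icc 1 s, α v * (v : ℝ) ^ (2*j+1)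
        = (((2*s).choose s : ℝ)) * (0:ℝ)^(2*j) / 2 / (((2*s).choose s) : ℝ) := by
    intro j hj
    have h1 : ∀ v ∈ Finset.Icc 1 s, α v * (v:ℝ)^(2*j+1)
        = (-1:ℝ)^(v+1) * (((2*s).choose (s+v)) : ℝ) * (v:ℝ)^(2*j) / (((2*s).choose s) : ℝ) := by
      intro v hv
      rw [Finset.mem_Icc] at hv
      exact term_eq s j v hv.1 hv.2 α hα 0
    rw [Finset.sum_congr rfl h1, ← Finset.sum_div, key_sum s j hj]
  constructor
  · have h := main 0 (by omega)
    simp only [pow_zero, mul_zero, zero_add, pow_one] at h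
    rw [h]
    field_simp
  · intro j hj1 hj2
    have h := main j (by omega)
    rw [h]
    have : (0:ℝ)^(2*j) = 0 := by
      apply zero_pow; omega
    rw [this]
    ring
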